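/- arXiv:2507.21667 — 2 statements merged into one kernel-verified Lean document; each statement's English description precedes it below -/
import Mathlib

section
/- Let A ∈ ℝ^{N×N} be an entrywise nonnegative matrix with zero diagonal whose associated directed graph is strongly connected (i.e., for every nonempty proper subset S of {1,…,N} there exist i ∉ S and j ∈ S with A i j > 0), let D = diag(d_1,…,d_N) with d_i = Σ_j a_{ij}, let L = D − A, and let B = diag(b_1,…,b_N) with b_i ≥ 0 for all i and b_i > 0 for at least one i. Then the matrix L + B is nonsingular. -/
open Matrix Finset

/-- For an entrywise nonnegative adjacency matrix `A` with zero diagonal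
whose directed graph is strongly connected, `D` the in-degree matrix, `L = D - A`
the Laplacian, and `B` a nonnegative diagonal matrix with at least one positive
entry, the matrix `L + B` is nonsingular. -/
theorem laplacian_plus_pinning_nonsingular
    {N : ℕ} (A : Matrix (Fin N) (Fin N) ℝ)
    (hA_nonneg : ∀ i j, 0 ≤ A i j)
    (hA_diag : ∀ i, A i i = 0)
    (hconn : ∀ S : Finset (Fin N), S.Nonempty → S ≠ Finset.univ →
      ∃ i ∉ S, ∃ j ∈ S, 0 < A i j)
    (b : Fin N → ℝ)
    (hb_nonneg : ∀ i, 0 ≤ b i)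
    (hb_pos : ∃ i, 0 < b i)
    (D : Matrix (Fin N) (Fin N) ℝ) (hD : D = Matrix.diagonal (fun i => ∑ j, A i j))
    (L : Matrix (Fin N) (Fin N) ℝ) (hL : L = D - A)
    (B : Matrix (Fin N) (Fin N) ℝ) (hB : B = Matrix.diagonal b) :
    (L + B).det ≠ 0 := by
  subst hD hL hB
  intro hdet
  obtain ⟨x, hx0, hMx⟩ := (Matrix.exists_mulVec_eq_zero_iff).2 hdet
  set d : Fin N → ℝ := fun i => ∑ j, A i j with hd
  have hN : Nonempty (Fin N) := ⟨hb_pos.choose⟩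
  -- Row equation
  have hrow : ∀ i, (d i + b i) * x i = ∑ j, A i j * x j := by
    intro i
    have h := congrFun hMx i
    have h1 : (∑ j, ((Matrix.diagonal d - A + Matrix.diagonal b) i j) * x j) = 0 := h
    have h2 : ∀ j, ((Matrix.diagonal d - A + Matrix.diagonal b) i j) * x j
        = (if i = j then d i * x j else 0) + (if i = j then b i * x j else 0)
          - A i j * x j := by
      intro j
      by_cases hij : i = j <;>
        simp [Matrix.sub_apply, Matrix.add_apply, Matrix.diagonal_apply, hij, sub_mul, add_mul]
      ring
    rw [Finset.sum_congr rfl (fun j _ => h2 j)] at h1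
    rw [Finset.sum_sub_distrib, Finset.sum_add_distrib, Finset.sum_ite_eq,
      Finset.sum_ite_eq] at h1
    simp only [Finset.mem_univ, if_true] at h1
    linarith [h1]
  -- The maximum of |x|
  have huniv : (Finset.univ : Finset (Fin N)).Nonempty := Finset.univ_nonempty
  set m : ℝ := Finset.univ.sup' huniv (fun j => |x j|) with hm
  have hle : ∀ j, |x j| ≤ m := fun j => Finset.le_sup' (fun k => |x k|) (Finset.mem_univ j)
  have hmpos : 0 < m := by
    have : ∃ j, x j ≠ 0 := by
      by_contra hc
      push_neg at hc
      exact hx0 (funext hc)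
    obtain ⟨j, hj⟩ := this
    exact lt_of_lt_of_le (abs_pos.2 hj) (hle j)
  -- Key claim at any maximizing index
  have hkey : ∀ i, |x i| = m → b i = 0 ∧ ∀ j, 0 < A i j → |x j| = m := by
    intro i hi
    have habs : (d i + b i) * m ≤ ∑ j, A i j * |x j| := by
      calc (d i + b i) * m = |(d i + b i) * x i| := by
            rw [abs_mul, hi, abs_of_nonneg]
            have := hA_nonneg i
            have : 0 ≤ d i := Finset.sum_nonneg fun j _ => hA_nonneg i j
            linarith [hb_nonneg i]
        _ = |∑ j, A i j * x j| := by rw [hrow i]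
        _ ≤ ∑ j, |A i j * x j| := Finset.abs_sum_le_sum_abs _ _
        _ = ∑ j, A i j * |x j| := by
            refine Finset.sum_congr rfl fun j _ => ?_
            rw [abs_mul, abs_of_nonneg (hA_nonneg i j)]
    have hub : ∑ j, A i j * |x j| ≤ d i * m := by
      rw [hd, Finset.sum_mul]
      exact Finset.sum_le_sum fun j _ =>
        mul_le_mul_of_nonneg_left (hle j) (hA_nonneg i j)
    have hb0 : b i = 0 := by
      have : b i * m ≤ 0 := by nlinarith
      have := hb_nonneg i
      nlinarith
    have heq : ∑ j, A i j * |x j| = d i * m := le_antisymm hub (by nlinarith)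
    have hzero : ∑ j, A i j * (m - |x j|) = 0 := by
      have : ∑ j, A i j * (m - |x j|) = d i * m - ∑ j, A i j * |x j| := by
        rw [hd, Finset.sum_mul, ← Finset.sum_sub_distrib]
        exact Finset.sum_congr rfl fun j _ => by ring
      rw [this, heq]; ring
    refine ⟨hb0, fun j hj => ?_⟩
    have hterm : A i j * (m - |x j|) = 0 := by
      have := (Finset.sum_eq_zero_iff_of_nonneg
        (fun k _ => mul_nonneg (hA_nonneg i k) (by linarith [hle k]))).1 hzero j
        (Finset.mem_univ j)
      exact this
    have : m - |x j| = 0 := by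
      rcases mul_eq_zero.1 hterm with h | h
      · exact absurd h (ne_of_gt hj)
      · exact h
    linarith
  -- The set of maximizers
  set S : Finset (Fin N) := Finset.univ.filter (fun j => |x j| = m) with hS
  have hSne : S.Nonempty := by
    obtain ⟨i, _, hi⟩ := Finset.exists_mem_eq_sup' huniv (fun j => |x j|)
    exact ⟨i, Finset.mem_filter.2 ⟨Finset.mem_univ i, hi.symm⟩⟩
  by_cases hSuniv : S = Finset.univ
  · -- every index maximizes, so all b i = 0, contradiction
    obtain ⟨i, hbi⟩ := hb_pos
    have hi : i ∈ S := hSuniv ▸ Finset.mem_univ i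
    have := (hkey i (Finset.mem_filter.1 hi).2).1
    linarith
  · -- complement of S is nonempty and proper
    have hScne : Sᶜ.Nonempty := by
      rw [Finset.nonempty_iff_ne_empty]
      intro h
      exact hSuniv ((Finset.compl_eq_empty_iff S).1 h)
    have hScuniv : Sᶜ ≠ Finset.univ := by
      intro h
      obtain ⟨i, hi⟩ := hSne
      have : i ∈ Sᶜ := h ▸ Finset.mem_univ i
      exact (Finset.mem_compl.1 this) hi
    obtain ⟨i, hiS, j, hjS, hij⟩ := hconn Sᶜ hScne hScuniv
    have hiS' : i ∈ S := by
      by_contra hc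
      exact hiS (Finset.mem_compl.2 hc)
    have hjm : |x j| = m := (hkey i (Finset.mem_filter.1 hiS').2).2 j hij
    exact (Finset.mem_compl.1 hjS) (Finset.mem_filter.2 ⟨Finset.mem_univ j, hjm⟩)
end

section
/- Let A ∈ ℝ^{N×N} be an entrywise nonnegative matrix with zero diagonal whose associated directed graph is strongly connected, let D = diag(d_i) with d_i = Σ_j a_{ij}, L = D − A, and B = diag(b_i) with all b_i ≥ 0 and at least one b_i > 0. Then the vector q = (L + B)^{-1} 1 (where 1 ∈ ℝ^N is the all-ones vector) has all entries strictly positive. -/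
open Matrix Finset

/-- Under the strong-connectivity and pinning hypotheses, the vector
`q = (L + B)⁻¹ 1` has all entries strictly positive. -/
theorem q_entries_positive
    {N : ℕ} (A : Matrix (Fin N) (Fin N) ℝ)
    (hA_nonneg : ∀ i j, 0 ≤ A i j)
    (hA_diag : ∀ i, A i i = 0)
    (hconn : ∀ S : Finset (Fin N), S.Nonempty → S ≠ Finset.univ →
      ∃ i ∉ S, ∃ j ∈ S, 0 < A i j)
    (b : Fin N → ℝ)
    (hb_nonneg : ∀ i, 0 ≤ b i)
    (hb_pos : ∃ i, 0 < b i)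
    (D : Matrix (Fin N) (Fin N) ℝ) (hD : D = Matrix.diagonal (fun i => ∑ j, A i j))
    (L : Matrix (Fin N) (Fin N) ℝ) (hL : L = D - A)
    (B : Matrix (Fin N) (Fin N) ℝ) (hB : B = Matrix.diagonal b)
    (q : Fin N → ℝ) (hq : q = (L + B)⁻¹ *ᵥ (fun _ => (1 : ℝ))) :
    ∀ i, 0 < q i := by
  subst hD hL hB hq
  set M : Matrix (Fin N) (Fin N) ℝ :=
    Matrix.diagonal (fun i => ∑ j, A i j) - A + Matrix.diagonal b with hM
  -- row formula
  have hrow : ∀ (x : Fin N → ℝ) (i : Fin N),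
      (M *ᵥ x) i = (∑ j, A i j) * x i + b i * x i - ∑ j, A i j * x j := by
    intro x i
    rw [hM, Matrix.add_mulVec, Matrix.sub_mulVec]
    simp only [Pi.add_apply, Pi.sub_apply, Matrix.mulVec_diagonal]
    have hAx : (A *ᵥ x) i = ∑ j, A i j * x j := rfl
    rw [hAx]
    ring
  -- any kernel vector is entrywise nonpositive
  have hker : ∀ x : Fin N → ℝ, M *ᵥ x = 0 → ∀ i, x i ≤ 0 := by
    intro x hx
    by_contra h
    push_neg at h
    obtain ⟨i0, hi0⟩ := h
    obtain ⟨m, -, hm⟩ := Finset.exists_max_image Finset.univ x ⟨i0, Finset.mem_univ i0⟩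
    have hmle : ∀ j, x j ≤ x m := fun j => hm j (Finset.mem_univ j)
    have hc : 0 < x m := lt_of_lt_of_le hi0 (hmle i0)
    set c := x m with hcdef
    set S : Finset (Fin N) := Finset.univ.filter (fun j => x j = c) with hSdef
    have hmS : m ∈ S := by simp [hSdef, hcdef]
    have key : ∀ i ∈ S, b i = 0 ∧ ∀ j, 0 < A i j → j ∈ S := by
      intro i hiS
      have hxi : x i = c := by simpa [hSdef] using hiS
      have hxi0 : (M *ᵥ x) i = 0 := by rw [hx]; rfl
      rw [hrow, hxi] at hxi0
      have hsum0 : b i * c + ∑ j, A i j * (c - x j) = 0 := by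
        have heq : ∑ j, A i j * (c - x j) = (∑ j, A i j) * c - ∑ j, A i j * x j := by
          rw [Finset.sum_mul, ← Finset.sum_sub_distrib]
          congr 1; ext j; ring
        rw [heq]; linarith
      have hterm : ∀ j ∈ Finset.univ, 0 ≤ A i j * (c - x j) := by
        intro j _
        exact mul_nonneg (hA_nonneg i j) (sub_nonneg.mpr (hmle j))
      have hsnn : 0 ≤ ∑ j, A i j * (c - x j) := Finset.sum_nonneg hterm
      have hbc : 0 ≤ b i * c := mul_nonneg (hb_nonneg i) (le_of_lt hc)
      have hbc0 : b i * c = 0 := by linarith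
      have hsz : ∑ j, A i j * (c - x j) = 0 := by linarith
      constructor
      · rcases mul_eq_zero.mp hbc0 with h | h
        · exact h
        · exact absurd h (ne_of_gt hc)
      · intro j hAij
        have hj := (Finset.sum_eq_zero_iff_of_nonneg hterm).mp hsz j (Finset.mem_univ j)
        rcases mul_eq_zero.mp hj with h | h
        · exact absurd h (ne_of_gt hAij)
        · have hxj : x j = c := by linarith
          simp [hSdef, hxj]
    by_cases hSu : S = Finset.univ
    · obtain ⟨k, hk⟩ := hb_pos
      have : b k = 0 := (key k (hSu ▸ Finset.mem_univ k)).1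
      exact absurd this (ne_of_gt hk)
    · have hScne : Sᶜ.Nonempty := by
        by_contra hne
        apply hSu
        rw [Finset.not_nonempty_iff_eq_empty] at hne
        rwa [Finset.compl_eq_empty_iff] at hne
      have hScnu : Sᶜ ≠ Finset.univ := by
        intro hcu
        have : m ∈ Sᶜ := hcu ▸ Finset.mem_univ m
        exact (Finset.mem_compl.mp this) hmS
      obtain ⟨i, hiSc, j, hjSc, hAij⟩ := hconn Sᶜ hScne hScnu
      have hiS : i ∈ S := by
        by_contra hiS
        exact hiSc (Finset.mem_compl.mpr hiS)
      exact (Finset.mem_compl.mp hjSc) ((key i hiS).2 j hAij)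
  -- M has nonzero determinant
  have hdet : M.det ≠ 0 := by
    intro h0
    obtain ⟨v, hv, hMv⟩ := (Matrix.exists_mulVec_eq_zero_iff).mpr h0
    apply hv
    funext i
    have h1 : v i ≤ 0 := hker v hMv i
    have h2 : -v i ≤ 0 := by
      have : M *ᵥ (-v) = 0 := by rw [Matrix.mulVec_neg, hMv, neg_zero]
      exact hker (-v) this i
    have : v i = 0 := le_antisymm h1 (by linarith)
    simpa using this
  -- M applied to q gives 1
  have hMq : M *ᵥ (M⁻¹ *ᵥ (fun _ => (1 : ℝ))) = (fun _ => (1 : ℝ)) := by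
    rw [Matrix.mulVec_mulVec, Matrix.mul_nonsing_inv M (isUnit_iff_ne_zero.mpr hdet),
      Matrix.one_mulVec]
  set q : Fin N → ℝ := M⁻¹ *ᵥ (fun _ => (1 : ℝ)) with hqdef
  intro i
  have hNe : (Finset.univ : Finset (Fin N)).Nonempty := ⟨i, Finset.mem_univ i⟩
  obtain ⟨m, -, hm⟩ := Finset.exists_min_image Finset.univ q hNe
  have hmle : ∀ j, q m ≤ q j := fun j => hm j (Finset.mem_univ j)
  have h1 : (∑ j, A m j) * q m + b m * q m - ∑ j, A m j * q j = 1 := by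
    have := congrFun hMq m
    rw [hrow] at this
    exact this
  have hsumge : (∑ j, A m j) * q m ≤ ∑ j, A m j * q j := by
    rw [Finset.sum_mul]
    apply Finset.sum_le_sum
    intro j _
    exact mul_le_mul_of_nonneg_left (hmle j) (hA_nonneg m j)
  have hbm : 1 ≤ b m * q m := by linarith
  have hqm : 0 < q m := by
    by_contra hqm
    push_neg at hqm
    have : b m * q m ≤ 0 := mul_nonpos_of_nonneg_of_nonpos (hb_nonneg m) hqm
    linarith
  exact lt_of_lt_of_le hqm (hmle i)
end
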